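/- Suppose a¹, …, a^{n−1} : ℝ → ℝ are differentiable at t₀ with a^{i'}(t₀) = 0, and suppose that for all t near t₀ and all i' = 1, …, n−1 one has g(t)(w(t), e_{i'}) = 0, where w(t) = e_n + ∑_{j'=1}^{n−1} a^{j'}(t) e_{j'}. Define the unit normal ν(t) = w(t) / √(g(t)(w(t), w(t))). Then ν is differentiable at t₀ with ν(t₀) = e_n and ν'(t₀) = 2 ∑_{i'=1}^{n−1} S(e_{i'}, e_n) e_{i'} + S(e_n, e_n) e_n. (This is formula (2.12) of the paper: ∂ₜν = 2 ∑_{i'} Ric_{i'ν} ∂_{i'} + Ric_{νν} ∂_ν for the evolution of the outward unit normal under the Ricci flow.) -/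

import Mathlib

/-- Formula (2.12): evolution of the outward unit normal under the Ricci flow
`∂ₜ g = −2S`.  With `w(t) = e_n + ∑_{j'} a^{j'}(t) e_{j'}` kept `g(t)`-orthogonal to
the tangent vectors and `ν(t) = w(t)/√(g(t)(w(t),w(t)))`, one has `ν(t₀) = e_n` and
`ν'(t₀) = 2 ∑_{i'} S(e_{i'}, e_n) e_{i'} + S(e_n, e_n) e_n`. -/
theorem deriv_outward_unit_normal
    (n : ℕ) (hn : 2 ≤ n) (t₀ : ℝ)
    (g : ℝ → LinearMap.BilinForm ℝ (Fin n → ℝ))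
    (S : LinearMap.BilinForm ℝ (Fin n → ℝ))
    (hSsymm : ∀ v w, S v w = S w v)
    (hgsymm : ∀ t v w, g t v w = g t w v)
    (hgpos : ∀ t v, v ≠ 0 → 0 < g t v v)
    (hgderiv : ∀ v w, HasDerivAt (fun t => g t v w) (-2 * S v w) t₀)
    (e : Fin n → (Fin n → ℝ))
    (hbasis : ∃ b : Module.Basis (Fin n) ℝ (Fin n → ℝ), ∀ i, b i = e i)
    (honb : ∀ i j, g t₀ (e i) (e j) = if i = j then 1 else 0)
    (a : Fin (n - 1) → ℝ → ℝ)
    (hadiff : ∀ i, DifferentiableAt ℝ (a i) t₀)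
    (ha0 : ∀ i, a i t₀ = 0)
    (w : ℝ → (Fin n → ℝ))
    (hw : ∀ t, w t = e ⟨n - 1, by omega⟩
            + ∑ j : Fin (n - 1), a j t • e (Fin.castLE (Nat.sub_le n 1) j))
    (horth : ∀ᶠ t in nhds t₀, ∀ i : Fin (n - 1),
      g t (w t) (e (Fin.castLE (Nat.sub_le n 1) i)) = 0)
    (ν : ℝ → (Fin n → ℝ))
    (hν : ∀ t, ν t = (Real.sqrt (g t (w t) (w t)))⁻¹ • w t) :
    ν t₀ = e ⟨n - 1, by omega⟩ ∧
      HasDerivAt ν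
        ((2 : ℝ) • ∑ i : Fin (n - 1),
            S (e (Fin.castLE (Nat.sub_le n 1) i)) (e ⟨n - 1, by omega⟩)
              • e (Fin.castLE (Nat.sub_le n 1) i)
          + S (e ⟨n - 1, by omega⟩) (e ⟨n - 1, by omega⟩) • e ⟨n - 1, by omega⟩) t₀ := by
  have hN : n - 1 < n := by omega
  set c : Fin (n - 1) → Fin n := Fin.castLE (Nat.sub_le n 1) with hc
  set eN : Fin n → ℝ := e ⟨n - 1, hN⟩ with heN
  have hcne : ∀ j : Fin (n - 1), c j ≠ ⟨n - 1, hN⟩ := by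
    intro j h
    have : (j : ℕ) = n - 1 := congrArg Fin.val h
    omega
  have hcinj : Function.Injective c := Fin.castLE_injective _
  -- derivatives of the coefficients
  set d : Fin (n - 1) → ℝ := fun j => deriv (a j) t₀ with hdd
  have hd : ∀ j, HasDerivAt (a j) (d j) t₀ := fun j => (hadiff j).hasDerivAt
  -- derivative of t ↦ g t (w t) v for basis vectors v
  have hFgen : ∀ v : Fin n → ℝ,
      HasDerivAt (fun t => g t (w t) v)
        (-2 * S eN v + ∑ j, (d j * g t₀ (e (c j)) v + a j t₀ * (-2 * S (e (c j)) v))) t₀ := by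
    intro v
    have heq : (fun t => g t (w t) v)
        = fun t => g t eN v + ∑ j, a j t * g t (e (c j)) v := by
      funext t
      rw [hw t]
      simp [map_add, map_sum, map_smul, LinearMap.add_apply, LinearMap.sum_apply,
        LinearMap.smul_apply, smul_eq_mul]
    rw [heq]
    exact (hgderiv eN v).add
      (HasDerivAt.fun_sum fun j _ => (hd j).mul (hgderiv (e (c j)) v))
  have hd2 : ∀ i, d i = 2 * S eN (e (c i)) := by
    intro i
    have hF := hFgen (e (c i))
    have hsum : (∑ j, (d j * g t₀ (e (c j)) (e (c i)) + a j t₀ * (-2 * S (e (c j)) (e (c i)))))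
        = d i := by
      have : ∀ j : Fin (n - 1),
          d j * g t₀ (e (c j)) (e (c i)) + a j t₀ * (-2 * S (e (c j)) (e (c i)))
          = if j = i then d j else 0 := by
        intro j
        rw [ha0, honb]
        by_cases h : j = i <;> simp [h, hcinj.eq_iff]
      rw [Finset.sum_congr rfl fun j _ => this j]
      simp
    rw [hsum] at hF
    have hF0 : HasDerivAt (fun t => g t (w t) (e (c i))) 0 t₀ := by
      refine (hasDerivAt_const t₀ (0 : ℝ)).congr_of_eventuallyEq ?_
      filter_upwards [horth] with t ht using ht i
    have := hF.unique hF0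
    linarith
  -- derivative of w
  have hwfun : w = fun t => eN + ∑ j, a j t • e (c j) := funext hw
  have hwd : HasDerivAt w (∑ j, d j • e (c j)) t₀ := by
    rw [hwfun]
    simpa using (hasDerivAt_const t₀ eN).fun_add
      (HasDerivAt.fun_sum (u := Finset.univ) fun j _ => (hd j).smul_const (e (c j)))
  have hwt0 : w t₀ = eN := by simp [hw, ha0]
  -- derivative of G t = g t (w t) (w t)
  have hGH : (fun t => g t (w t) (w t)) =ᶠ[nhds t₀] (fun t => g t (w t) eN) := by
    filter_upwards [horth] with t ht
    have key : g t (w t) (w t) = g t (w t) (eN + ∑ j, a j t • e (c j)) :=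
      congrArg (g t (w t)) (hw t)
    rw [key, map_add, map_sum]
    simp [ht, map_smul, smul_eq_mul]
  have hH : HasDerivAt (fun t => g t (w t) eN) (-2 * S eN eN) t₀ := by
    have := hFgen eN
    have hsum : (∑ j, (d j * g t₀ (e (c j)) eN + a j t₀ * (-2 * S (e (c j)) eN))) = 0 := by
      refine Finset.sum_eq_zero fun j _ => ?_
      rw [ha0, heN, honb]
      simp [hcne j]
    rw [hsum, add_zero] at this
    exact this
  have hG : HasDerivAt (fun t => g t (w t) (w t)) (-2 * S eN eN) t₀ :=
    hH.congr_of_eventuallyEq hGH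
  have hGt0 : g t₀ (w t₀) (w t₀) = 1 := by rw [hwt0, heN, honb]; simp
  -- sqrt and inverse
  have hsqrt : HasDerivAt (fun t => Real.sqrt (g t (w t) (w t))) (-S eN eN) t₀ := by
    have h1 := hG.sqrt (by rw [hGt0]; norm_num)
    have h2 : -2 * S eN eN / (2 * Real.sqrt (g t₀ (w t₀) (w t₀))) = -S eN eN := by
      rw [hGt0, Real.sqrt_one]; ring
    rwa [h2] at h1
  have hst0 : Real.sqrt (g t₀ (w t₀) (w t₀)) = 1 := by rw [hGt0, Real.sqrt_one]
  have hinv : HasDerivAt (fun t => (Real.sqrt (g t (w t) (w t)))⁻¹) (S eN eN) t₀ := by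
    have h1 := hsqrt.inv (by rw [hst0]; norm_num)
    have h2 : -(-S eN eN) / Real.sqrt (g t₀ (w t₀) (w t₀)) ^ 2 = S eN eN := by
      rw [hst0]; ring
    rwa [h2] at h1
  have hνfun : ν = fun t => (Real.sqrt (g t (w t) (w t)))⁻¹ • w t := funext hν
  constructor
  · rw [hν, hst0, inv_one, one_smul, hwt0]
  · have h1 := hinv.smul hwd
    rw [hst0, inv_one, one_smul, hwt0] at h1
    rw [hνfun]
    convert h1 using 2
    any_goals rfl
    rw [Finset.smul_sum]
    refine (Finset.sum_congr rfl fun j _ => ?_).symm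
    rw [hd2 j, smul_smul, hSsymm]
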